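/- Every point of the curve Γ = {(η₁,η₂,η₃;ξ) = (η, r(η), -r(η); 0) : |η| > 1} is a space-time resonance for the quartic gBBM phase φ(η₁,η₂,η₃;ξ) = -ω(ξ) + ω(η₁) + ω(η₂) + ω(η₃) + ω(ξ-η₁-η₂-η₃), where ω(ξ) = ξ/(1+ξ²) and r(η) = sign(η)·√((η²+3)/(η²-1)). -/

import Mathlib

noncomputable def ω : ℝ → ℝ := fun ξ => ξ / (1 + ξ^2)

noncomputable def r (ξ : ℝ) : ℝ := Real.sign ξ * Real.sqrt ((ξ^2 + 3) / (ξ^2 - 1))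

noncomputable def φ (η₁ η₂ η₃ ξ : ℝ) : ℝ :=
  -ω ξ + ω η₁ + ω η₂ + ω η₃ + ω (ξ - η₁ - η₂ - η₃)

lemma hasDerivAt_ω (x : ℝ) : HasDerivAt ω ((1 - x^2) / (1 + x^2)^2) x := by
  have h : (1 + x^2) ≠ 0 := by positivity
  have h1 : HasDerivAt (fun y : ℝ => y) 1 x := hasDerivAt_id x
  have h2 : HasDerivAt (fun y : ℝ => 1 + y^2) (2 * x) x := by
    simpa using ((hasDerivAt_pow 2 x).const_add 1)
  have := h1.div h2 h
  exact (show HasDerivAt ω _ x from this).congr_deriv (by ring)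

lemma r_sq {η : ℝ} (hη : 1 < |η|) : (r η)^2 = (η^2 + 3) / (η^2 - 1) := by
  have hη2 : 1 < η^2 := by
    have := sq_abs η ▸ one_lt_sq_iff_one_lt_abs (a := η)
    nlinarith [sq_abs η, hη, abs_nonneg η]
  have hne : η ≠ 0 := by
    intro h; subst h; norm_num at hη
  have hs : (Real.sign η)^2 = 1 := by
    rcases lt_or_gt_of_ne hne with h | h
    · rw [Real.sign_of_neg h]; norm_num
    · rw [Real.sign_of_pos h]; norm_num
  have hnn : 0 ≤ (η^2 + 3) / (η^2 - 1) := by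
    apply div_nonneg <;> nlinarith
  rw [r, mul_pow, hs, one_mul, Real.sq_sqrt hnn]

theorem bbm_resonant_curve :
    ∀ η : ℝ, 1 < |η| →
      φ η (r η) (-r η) 0 = 0 ∧
      deriv (fun t => φ t (r η) (-r η) 0) η = 0 ∧
      deriv (fun t => φ η t (-r η) 0) (r η) = 0 ∧
      deriv (fun t => φ η (r η) t 0) (-r η) = 0 := by
  intro η hη
  have hη2 : 1 < η^2 := by nlinarith [sq_abs η, hη, abs_nonneg η]
  have hne1 : η^2 - 1 ≠ 0 := by nlinarith
  have hrsq : (r η)^2 = (η^2 + 3) / (η^2 - 1) := r_sq hη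
  -- key: ω' (r η) = ω' η  (even in the variable, depends only on square)
  have hkey : (1 - (r η)^2) / (1 + (r η)^2)^2 = (1 - η^2) / (1 + η^2)^2 := by
    rw [hrsq]
    have h2 : (1 : ℝ) + (η^2 + 3) / (η^2 - 1) = (2*η^2 + 2) / (η^2 - 1) := by
      field_simp; ring
    have h1 : (1 : ℝ) - (η^2 + 3) / (η^2 - 1) = (-4) / (η^2 - 1) := by
      field_simp; ring
    rw [h1, h2]
    have hp : (1:ℝ) + η^2 ≠ 0 := by positivity
    have hq : (2:ℝ)*η^2 + 2 ≠ 0 := by positivity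
    field_simp
    ring
  -- odd function facts
  have hodd : ∀ x : ℝ, ω (-x) = -ω x := by
    intro x; simp only [ω]; rw [neg_pow]; ring
  refine ⟨?_, ?_, ?_, ?_⟩
  · simp only [φ]
    have h0 : (0:ℝ) - η - r η - -r η = -η := by ring
    rw [h0, hodd, hodd]
    simp [ω]
  · -- function is constant 0
    have hconst : (fun t => φ t (r η) (-r η) 0) = fun _ => (0:ℝ) := by
      funext t
      simp only [φ]
      have h0 : (0:ℝ) - t - r η - -r η = -t := by ring
      rw [h0, hodd, hodd]
      simp [ω]
    rw [hconst]
    simp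
  · have hf : (fun t => φ η t (-r η) 0) =
        fun t => (-ω 0 + ω η + ω (-r η)) + (ω t + ω (r η - η - t)) := by
      funext t; simp only [φ]
      have h0 : (0:ℝ) - η - t - -r η = r η - η - t := by ring
      rw [h0]; ring
    rw [hf]
    have hinner : HasDerivAt (fun t : ℝ => r η - η - t) (-1) (r η) := by
      simpa using (hasDerivAt_id' (r η)).const_sub (r η - η)
    have h2 : HasDerivAt (fun t : ℝ => ω (r η - η - t))
        ((1 - (-η)^2) / (1 + (-η)^2)^2 * (-1)) (r η) := by
      have e : r η - η - r η = -η := by ring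
      have hω := hasDerivAt_ω (-η)
      rw [← e] at hω
      simpa [Function.comp_def, e] using hω.comp (r η) hinner
    have h1 : HasDerivAt ω ((1 - (r η)^2) / (1 + (r η)^2)^2) (r η) := hasDerivAt_ω (r η)
    have hsum := ((h1.add h2).const_add (-ω 0 + ω η + ω (-r η)))
    rw [(show HasDerivAt (fun t => -ω 0 + ω η + ω (-r η) + (ω t + ω (r η - η - t))) _ (r η) from hsum).deriv]
    rw [hkey]
    ring_nf
  · have hf : (fun t => φ η (r η) t 0) =
        fun t => (-ω 0 + ω η + ω (r η)) + (ω t + ω (-η - r η - t)) := by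
      funext t; simp only [φ]
      have h0 : (0:ℝ) - η - r η - t = -η - r η - t := by ring
      rw [h0]; ring
    rw [hf]
    have hinner : HasDerivAt (fun t : ℝ => -η - r η - t) (-1) (-r η) := by
      simpa using (hasDerivAt_id' (-r η)).const_sub (-η - r η)
    have h2 : HasDerivAt (fun t : ℝ => ω (-η - r η - t))
        ((1 - (-η)^2) / (1 + (-η)^2)^2 * (-1)) (-r η) := by
      have e : -η - r η - (-r η) = -η := by ring
      have hω := hasDerivAt_ω (-η)
      rw [← e] at hω
      simpa [Function.comp_def, e] using hω.comp (-r η) hinner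
    have h1 : HasDerivAt ω ((1 - (-r η)^2) / (1 + (-r η)^2)^2) (-r η) := hasDerivAt_ω (-r η)
    have hsum := ((h1.add h2).const_add (-ω 0 + ω η + ω (r η)))
    rw [(show HasDerivAt (fun t => -ω 0 + ω η + ω (r η) + (ω t + ω (-η - r η - t))) _ (-r η) from hsum).deriv]
    have : (-r η)^2 = (r η)^2 := by ring
    rw [this, hkey]
    ring_nf
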